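/- For all real α > 0 and all real a ≥ 0, ∫₀^∞ t · e^{-αt} · e^{-a²/(2t)} / √(2πt) dt = e^{-√(2α)·a} · (1/(2α√(2α)) + a/(2α)). -/

import Mathlib

open MeasureTheory Real Set

open Filter


lemma aux_xe {x : ℝ} (hx : 0 ≤ x) : x * Real.exp (-x) ≤ 1 := by
  rw [Real.exp_neg, mul_inv_le_iff₀ (Real.exp_pos x), one_mul]
  linarith [Real.add_one_le_exp x]

lemma int_dom {c C : ℝ} (hc : 0 < c) {h : ℝ → ℝ}
    (hcont : ContinuousOn h (Ioi 0))
    (hb : ∀ s ∈ Ioi (0:ℝ), |h s| ≤ C * Real.exp (-c * s^2)) :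
    IntegrableOn h (Ioi (0:ℝ)) := by
  have hg : IntegrableOn (fun s => C * Real.exp (-c * s^2)) (Ioi 0) :=
    ((integrable_exp_neg_mul_sq hc).const_mul C).integrableOn
  refine hg.mono' (hcont.aestronglyMeasurable measurableSet_Ioi) ?_
  filter_upwards [ae_restrict_mem measurableSet_Ioi] with s hs
  simpa [Real.norm_eq_abs] using hb s hs

section
variable {r b : ℝ}

lemma exp_split (r b : ℝ) {s : ℝ} (hs : s ≠ 0) :
    Real.exp (-(r*s - b/s)^2)
      = Real.exp (2*r*b) * (Real.exp (-(r^2*s^2)) * Real.exp (-(b^2/s^2))) := by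
  rw [← Real.exp_add, ← Real.exp_add]
  congr 1
  field_simp
  ring

lemma cont_exp_phi (r b : ℝ) : ContinuousOn (fun s : ℝ => Real.exp (-(r*s - b/s)^2)) (Ioi 0) := by
  apply Real.continuous_exp.comp_continuousOn
  apply ContinuousOn.neg
  apply ContinuousOn.pow
  exact ((continuous_const.mul continuous_id).continuousOn).sub
    (continuousOn_const.div continuousOn_id (fun s hs => ne_of_gt hs))

lemma int_K0 (hr : 0 < r) (hb : 0 ≤ b) :
    IntegrableOn (fun s => Real.exp (-(r*s - b/s)^2)) (Ioi (0:ℝ)) := by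
  apply int_dom (show (0:ℝ) < r^2 by positivity) (cont_exp_phi r b)
  intro s hs
  have hs' : (0:ℝ) < s := hs
  rw [abs_of_pos (Real.exp_pos _), exp_split r b (ne_of_gt hs')]
  have h1 : Real.exp (-(b^2/s^2)) ≤ 1 := Real.exp_le_one_iff.mpr (neg_nonpos.mpr (by positivity))
  have h2 : (0:ℝ) < Real.exp (-(r^2*s^2)) := Real.exp_pos _
  calc Real.exp (2*r*b) * (Real.exp (-(r^2*s^2)) * Real.exp (-(b^2/s^2)))
      ≤ Real.exp (2*r*b) * (Real.exp (-(r^2*s^2)) * 1) := by gcongr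
    _ = Real.exp (2*r*b) * Real.exp (-(r^2)*s^2) := by ring_nf
  
lemma int_K2 (hr : 0 < r) (hb : 0 ≤ b) :
    IntegrableOn (fun s => s^2 * Real.exp (-(r*s - b/s)^2)) (Ioi (0:ℝ)) := by
  apply int_dom (show (0:ℝ) < r^2/2 by positivity)
    (ContinuousOn.mul (by fun_prop) (cont_exp_phi r b))
  intro s hs
  have hs' : (0:ℝ) < s := hs
  show |s^2 * Real.exp (-(r*s - b/s)^2)| ≤ _
  rw [abs_of_pos (by positivity), exp_split r b (ne_of_gt hs')]
  have h1 : Real.exp (-(b^2/s^2)) ≤ 1 := Real.exp_le_one_iff.mpr (neg_nonpos.mpr (by positivity))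
  have h2 : s^2 * Real.exp (-(r^2/2*s^2)) ≤ 2/r^2 := by
    have h := aux_xe (show (0:ℝ) ≤ r^2/2*s^2 by positivity)
    have : s^2 * Real.exp (-(r^2/2*s^2)) = (2/r^2) * ((r^2/2*s^2) * Real.exp (-(r^2/2*s^2))) := by
      field_simp
    rw [this]
    calc (2/r^2) * ((r^2/2*s^2) * Real.exp (-(r^2/2*s^2))) ≤ (2/r^2) * 1 := by
          gcongr
      _ = 2/r^2 := mul_one _
  have h3 : Real.exp (-(r^2*s^2)) = Real.exp (-(r^2/2*s^2)) * Real.exp (-(r^2/2*s^2)) := by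
    rw [← Real.exp_add]; ring_nf
  calc s^2 * (Real.exp (2*r*b) * (Real.exp (-(r^2*s^2)) * Real.exp (-(b^2/s^2))))
      = Real.exp (2*r*b) * ((s^2 * Real.exp (-(r^2/2*s^2)))
          * (Real.exp (-(r^2/2*s^2)) * Real.exp (-(b^2/s^2)))) := by rw [h3]; ring
    _ ≤ Real.exp (2*r*b) * ((2/r^2) * (Real.exp (-(r^2/2*s^2)) * 1)) := by
          gcongr <;> positivity
    _ = Real.exp (2*r*b) * (2/r^2) * Real.exp (-(r^2/2)*s^2) := by ring_nf
  
lemma int_Km2 (hr : 0 < r) (hb : 0 < b) :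
    IntegrableOn (fun s => s⁻¹^2 * Real.exp (-(r*s - b/s)^2)) (Ioi (0:ℝ)) := by
  apply int_dom (show (0:ℝ) < r^2 by positivity)
    (ContinuousOn.mul ((continuousOn_id.inv₀ (fun s hs => ne_of_gt hs)).pow 2) (cont_exp_phi r b))
  intro s hs
  have hs' : (0:ℝ) < s := hs
  show |s⁻¹^2 * Real.exp (-(r*s - b/s)^2)| ≤ _
  rw [abs_of_pos (by positivity), exp_split r b (ne_of_gt hs')]
  have h2 : s⁻¹^2 * Real.exp (-(b^2/s^2)) ≤ 1/b^2 := by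
    have h := aux_xe (show (0:ℝ) ≤ b^2/s^2 by positivity)
    have e : s⁻¹^2 * Real.exp (-(b^2/s^2)) = (1/b^2) * ((b^2/s^2) * Real.exp (-(b^2/s^2))) := by
      field_simp
    rw [e]
    calc (1/b^2) * ((b^2/s^2) * Real.exp (-(b^2/s^2))) ≤ (1/b^2) * 1 := by
          gcongr
      _ = 1/b^2 := mul_one _
  calc s⁻¹^2 * (Real.exp (2*r*b) * (Real.exp (-(r^2*s^2)) * Real.exp (-(b^2/s^2))))
      = Real.exp (2*r*b) * ((s⁻¹^2 * Real.exp (-(b^2/s^2))) * Real.exp (-(r^2*s^2))) := by ring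
    _ ≤ Real.exp (2*r*b) * ((1/b^2) * Real.exp (-(r^2*s^2))) := by gcongr <;> positivity
    _ = Real.exp (2*r*b) * (1/b^2) * Real.exp (-(r^2)*s^2) := by ring_nf
end

lemma invol_int (r b : ℝ) (hr : 0 < r) (hb : 0 < b) (g : ℝ → ℝ) :
    ∫ s in Ioi (0:ℝ), g s = ∫ s in Ioi (0:ℝ), (b / (r * s^2)) * g (b / (r * s)) := by
  have him : (fun s => b / (r*s)) '' Ioi (0:ℝ) = Ioi 0 := by
    apply Subset.antisymm
    · rintro _ ⟨s, hs, rfl⟩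
      have hs' : (0:ℝ) < s := hs
      exact div_pos hb (by positivity)
    · intro y hy
      have hy' : (0:ℝ) < y := hy
      exact ⟨b / (r * y), div_pos hb (by positivity), by field_simp⟩
  have hder : ∀ s ∈ Ioi (0:ℝ), HasDerivWithinAt (fun s => b / (r*s))
      (-(b / (r * s^2))) (Ioi 0) s := by
    intro s hs
    have hs' : (0:ℝ) < s := hs
    have h1 : HasDerivAt (fun s : ℝ => r * s) r s := by
      simpa using (hasDerivAt_id s).const_mul r
    have h2 := (h1.inv (by positivity)).const_mul b
    have : HasDerivAt (fun s : ℝ => b / (r*s)) (-(b / (r * s^2))) s := by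
      rw [show -(b / (r * s^2)) = b * (-r / (r*s)^2) by field_simp]
      simpa only [div_eq_mul_inv, Pi.inv_apply] using h2
    exact this.hasDerivWithinAt
  have hinj : InjOn (fun s => b / (r*s)) (Ioi (0:ℝ)) := by
    intro s hs t ht h
    have hs' : (0:ℝ) < s := hs
    have ht' : (0:ℝ) < t := ht
    simp only at h
    rw [div_eq_div_iff (by positivity) (by positivity)] at h
    have : r * t = r * s := mul_left_cancel₀ (ne_of_gt hb) h
    have := mul_left_cancel₀ (ne_of_gt hr) this
    linarith
  calc ∫ s in Ioi (0:ℝ), g s = ∫ s in (fun s => b / (r*s)) '' Ioi (0:ℝ), g s := by rw [him]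
    _ = ∫ s in Ioi (0:ℝ), |(-(b / (r * s^2)))| • g (b / (r*s)) :=
        integral_image_eq_integral_abs_deriv_smul measurableSet_Ioi hder hinj g
    _ = ∫ s in Ioi (0:ℝ), (b / (r * s^2)) * g (b / (r*s)) := by
        apply setIntegral_congr_fun measurableSet_Ioi
        intro s hs
        have hs' : (0:ℝ) < s := hs
        simp only [abs_neg, smul_eq_mul]
        rw [abs_of_pos (by positivity)]

section
variable {r b : ℝ} (hr : 0 < r) (hb : 0 < b)

lemma phi_deriv (hr : 0 < r) {s : ℝ} (hs : 0 < s) :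
    HasDerivAt (fun s : ℝ => r * s - b / s) (r + b / s^2) s := by
  have h1 : HasDerivAt (fun s : ℝ => r * s) r s := by
    simpa using (hasDerivAt_id s).const_mul r
  have h2 : HasDerivAt (fun s : ℝ => b / s) (-(b / s^2)) s := by
    rw [show -(b / s^2) = b * (-1 / s^2) by field_simp]
    simpa only [div_eq_mul_inv, Pi.inv_apply, id_eq] using ((hasDerivAt_id s).inv (ne_of_gt hs)).const_mul b
  exact (h1.sub h2).congr_deriv (by ring)

lemma phi_inj (hr : 0 < r) (hb : 0 < b) :
    InjOn (fun s : ℝ => r * s - b / s) (Ioi 0) := by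
  intro s hs t ht h
  have hs' : (0:ℝ) < s := hs
  have ht' : (0:ℝ) < t := ht
  simp only at h
  have h2 : (s - t) * (r * s * t + b) = 0 := by
    field_simp at h
    nlinarith [h]
  have h3 : r * s * t + b > 0 := by positivity
  have := mul_eq_zero.mp h2
  rcases this with h4 | h4
  · linarith
  · linarith

lemma phi_image (hr : 0 < r) (hb : 0 < b) :
    (fun s : ℝ => r * s - b / s) '' Ioi 0 = univ := by
  apply eq_univ_of_forall
  intro y
  set D := Real.sqrt (y^2 + 4*r*b) with hD
  have hD2 : D^2 = y^2 + 4*r*b := Real.sq_sqrt (by positivity)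
  have hDy : |y| < D := by
    nlinarith [abs_nonneg y, sq_abs y, Real.sqrt_nonneg (y^2+4*r*b)]
  have hs : (0:ℝ) < (y + D) / (2*r) := by
    have : -y < D := lt_of_le_of_lt (neg_le_abs y) hDy
    apply div_pos <;> [linarith; positivity]
  refine ⟨(y + D)/(2*r), hs, ?_⟩
  have hyD : (0:ℝ) < y + D := by
    have : -y < D := lt_of_le_of_lt (neg_le_abs y) hDy
    linarith
  have hne2 : y + D ≠ 0 := ne_of_gt hyD
  field_simp
  nlinarith [hD2]

lemma cov_main (hr : 0 < r) (hb : 0 < b) :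
    ∫ s in Ioi (0:ℝ), (r + b / s^2) * Real.exp (-(r*s - b/s)^2) = Real.sqrt π := by
  have h := integral_image_eq_integral_abs_deriv_smul (f := fun s : ℝ => r*s - b/s)
      (f' := fun s => r + b/s^2) measurableSet_Ioi
      (fun s hs => (phi_deriv hr (mem_Ioi.mp hs)).hasDerivWithinAt) (phi_inj hr hb)
      (fun u => Real.exp (-u^2))
  rw [phi_image hr hb] at h
  have h2 : ∫ u in (univ : Set ℝ), Real.exp (-u^2) = Real.sqrt π := by
    rw [setIntegral_univ]
    simpa using integral_gaussian 1
  rw [h2] at h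
  have h3 : ∫ s in Ioi (0:ℝ), (r + b / s^2) * Real.exp (-(r*s - b/s)^2)
      = ∫ s in Ioi (0:ℝ), |r + b/s^2| • Real.exp (-(r*s - b/s)^2) := by
    apply setIntegral_congr_fun measurableSet_Ioi
    intro s hs
    have hs' : (0:ℝ) < s := hs
    simp only [smul_eq_mul]
    rw [abs_of_pos (by positivity)]
  rw [h3, ← h]

lemma cov_main_int (hr : 0 < r) (hb : 0 < b) :
    IntegrableOn (fun s => (r + b / s^2) * Real.exp (-(r*s - b/s)^2)) (Ioi (0:ℝ)) := by
  have h := (integrableOn_image_iff_integrableOn_abs_deriv_smul (f := fun s : ℝ => r*s - b/s)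
      (f' := fun s => r + b/s^2) measurableSet_Ioi
      (fun s hs => (phi_deriv hr (mem_Ioi.mp hs)).hasDerivWithinAt) (phi_inj hr hb)
      (fun u => Real.exp (-u^2))).mp
  rw [phi_image hr hb] at h
  have h2 : IntegrableOn (fun u : ℝ => Real.exp (-u^2)) univ := by
    rw [integrableOn_univ]
    simpa using integrable_exp_neg_mul_sq (one_pos)
  have h3 := h h2
  apply h3.congr_fun ?_ measurableSet_Ioi
  intro s hs
  have hs' : (0:ℝ) < s := hs
  simp only [smul_eq_mul]
  rw [abs_of_pos (by positivity)]
end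

section
variable {r b : ℝ}

-- ∫ (r - b/s²) exp(-(rs+b/s)²) = 0 by the involution s ↦ b/(rs)
lemma M_zero (hr : 0 < r) (hb : 0 < b) :
    ∫ s in Ioi (0:ℝ), (r - b/s^2) * Real.exp (-(r*s + b/s)^2) = 0 := by
  have h := invol_int r b hr hb (fun s => (r - b/s^2) * Real.exp (-(r*s + b/s)^2))
  have h2 : ∫ s in Ioi (0:ℝ), (b / (r * s^2)) *
      ((r - b/(b/(r*s))^2) * Real.exp (-(r*(b/(r*s)) + b/(b/(r*s)))^2))
      = ∫ s in Ioi (0:ℝ), -((r - b/s^2) * Real.exp (-(r*s + b/s)^2)) := by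
    apply setIntegral_congr_fun measurableSet_Ioi
    intro s hs
    have hs' : (0:ℝ) < s := hs
    beta_reduce
    have e1 : r*(b/(r*s)) + b/(b/(r*s)) = r*s + b/s := by field_simp; ring
    have e2 : (b / (r * s^2)) * (r - b/(b/(r*s))^2) = -(r - b/s^2) := by field_simp; ring
    rw [e1, ← neg_mul, ← e2, mul_assoc]
  rw [h2] at h
  rw [integral_neg] at h
  linarith
end

section
variable {r b : ℝ}

lemma f2_zero (hr : 0 < r) (hb : 0 < b) :
    ∫ s in Ioi (0:ℝ), (r - b/s^2) * Real.exp (-(r*s - b/s)^2) = 0 := by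
  have h2 : ∫ s in Ioi (0:ℝ), (r - b/s^2) * Real.exp (-(r*s - b/s)^2)
      = ∫ s in Ioi (0:ℝ), Real.exp (4*r*b) * ((r - b/s^2) * Real.exp (-(r*s + b/s)^2)) := by
    apply setIntegral_congr_fun measurableSet_Ioi
    intro s hs
    have hs' : (0:ℝ) < s := hs
    beta_reduce
    rw [show -(r*s - b/s)^2 = 4*r*b + -(r*s + b/s)^2 by field_simp; ring, Real.exp_add]
    ring
  rw [h2, integral_const_mul, M_zero hr hb, mul_zero]

lemma f2_int (hr : 0 < r) (hb : 0 < b) :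
    IntegrableOn (fun s => (r - b/s^2) * Real.exp (-(r*s - b/s)^2)) (Ioi (0:ℝ)) := by
  have h : IntegrableOn (fun s => (2*r) * Real.exp (-(r*s - b/s)^2)
      - (r + b/s^2) * Real.exp (-(r*s - b/s)^2)) (Ioi (0:ℝ)) :=
    ((int_K0 hr hb.le).const_mul (2*r)).sub (cov_main_int hr hb)
  exact IntegrableOn.congr_fun h (fun s hs => by ring) measurableSet_Ioi

lemma K0_val (hr : 0 < r) (hb : 0 < b) :
    ∫ s in Ioi (0:ℝ), Real.exp (-(r*s - b/s)^2) = Real.sqrt π / (2*r) := by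
  have hadd := integral_add (cov_main_int hr hb) (f2_int hr hb)
  have h2 : ∫ s in Ioi (0:ℝ), ((r + b/s^2) * Real.exp (-(r*s - b/s)^2)
      + (r - b/s^2) * Real.exp (-(r*s - b/s)^2))
      = ∫ s in Ioi (0:ℝ), (2*r) * Real.exp (-(r*s - b/s)^2) := by
    apply setIntegral_congr_fun measurableSet_Ioi
    intro s hs
    ring
  rw [h2, integral_const_mul, cov_main hr hb, f2_zero hr hb, add_zero] at hadd
  field_simp at hadd ⊢
  linarith

lemma Km2_val (hr : 0 < r) (hb : 0 < b) :
    ∫ s in Ioi (0:ℝ), s⁻¹^2 * Real.exp (-(r*s - b/s)^2) = Real.sqrt π / (2*b) := by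
  have h := invol_int r b hr hb (fun s => s⁻¹^2 * Real.exp (-(r*s - b/s)^2))
  have h2 : ∫ s in Ioi (0:ℝ), (b / (r * s^2)) *
      ((b/(r*s))⁻¹^2 * Real.exp (-(r*(b/(r*s)) - b/(b/(r*s)))^2))
      = ∫ s in Ioi (0:ℝ), (r/b) * Real.exp (-(r*s - b/s)^2) := by
    apply setIntegral_congr_fun measurableSet_Ioi
    intro s hs
    have hs' : (0:ℝ) < s := hs
    beta_reduce
    rw [show r*(b/(r*s)) - b/(b/(r*s)) = -(r*s - b/s) by field_simp; ring, neg_sq]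
    field_simp
  rw [h2, integral_const_mul, K0_val hr hb] at h
  rw [h]
  field_simp

lemma K_deriv (hr : 0 < r) {s : ℝ} (hs : 0 < s) :
    HasDerivAt (fun s : ℝ => s * Real.exp (-(r*s - b/s)^2))
      ((1 - 2*(r^2*s^2 - b^2*s⁻¹^2)) * Real.exp (-(r*s - b/s)^2)) s := by
  have hφ := phi_deriv (b := b) hr hs
  have h1 := ((hφ.pow 2).neg).exp
  have h2 := (hasDerivAt_id s).mul h1
  refine h2.congr_deriv ?_
  have hs0 : s ≠ 0 := ne_of_gt hs
  simp only [Pi.neg_apply, Pi.pow_apply, id_eq, inv_pow]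
  field_simp
  linear_combination (2*b^2 - 2*r^2*s^4) * mul_inv_cancel₀ hs0

lemma FTC_zero (hr : 0 < r) (hb : 0 < b) :
    ∫ s in Ioi (0:ℝ), (1 - 2*(r^2*s^2 - b^2*s⁻¹^2)) * Real.exp (-(r*s - b/s)^2) = 0 := by
  have key : ∫ s in Ioi (0:ℝ), (1 - 2*(r^2*s^2 - b^2*s⁻¹^2)) * Real.exp (-(r*s - b/s)^2)
      = 0 - (fun s : ℝ => s * Real.exp (-(r*s - b/s)^2)) 0 := by
    apply integral_Ioi_of_hasDerivAt_of_tendsto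
      (f := fun s : ℝ => s * Real.exp (-(r*s - b/s)^2))
      (f' := fun s : ℝ => (1 - 2*(r^2*s^2 - b^2*s⁻¹^2)) * Real.exp (-(r*s - b/s)^2))
      (m := 0) (a := 0)
    · rw [ContinuousWithinAt]
      rw [show (0:ℝ) * Real.exp (-(r*0 - b/0)^2) = 0 by simp]
      apply squeeze_zero' (g := fun s : ℝ => s)
      · filter_upwards [eventually_mem_nhdsWithin] with s hs
        have : (0:ℝ) ≤ s := hs
        positivity
      · filter_upwards [eventually_mem_nhdsWithin] with s hs
        have h0 : (0:ℝ) ≤ s := hs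
        nlinarith [Real.exp_le_one_iff.mpr (neg_nonpos.mpr (sq_nonneg (r*s - b/s))),
          Real.exp_pos (-(r*s - b/s)^2)]
      · exact (continuous_id.tendsto 0).mono_left nhdsWithin_le_nhds
    · exact fun s hs => K_deriv hr hs
    · have h : IntegrableOn (fun s => (Real.exp (-(r*s - b/s)^2)
            - (2*r^2) * (s^2 * Real.exp (-(r*s - b/s)^2)))
            + (2*b^2) * (s⁻¹^2 * Real.exp (-(r*s - b/s)^2))) (Ioi (0:ℝ)) :=
        ((int_K0 hr hb.le).sub ((int_K2 hr hb.le).const_mul (2*r^2))).add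
          ((int_Km2 hr hb).const_mul (2*b^2))
      exact IntegrableOn.congr_fun h (fun s hs => by ring) measurableSet_Ioi
    · -- tendsto atTop 0
      have hc : Tendsto (fun s : ℝ => r^2*s^2) atTop atTop :=
        (tendsto_pow_atTop two_ne_zero).const_mul_atTop (by positivity)
      have h1 := (tendsto_pow_mul_exp_neg_atTop_nhds_zero 1).comp hc
      have h2 := h1.const_mul (Real.exp (2*r*b)/r^2)
      rw [mul_zero] at h2
      apply squeeze_zero' (g := fun s : ℝ => Real.exp (2*r*b)/r^2 * ((r^2*s^2)^1 * Real.exp (-(r^2*s^2))))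
      · filter_upwards [eventually_ge_atTop (0:ℝ)] with s hs
        positivity
      · filter_upwards [eventually_ge_atTop (1:ℝ)] with s hs
        have hs' : (0:ℝ) < s := by linarith
        rw [exp_split r b (ne_of_gt hs')]
        have e1 : Real.exp (-(b^2/s^2)) ≤ 1 := Real.exp_le_one_iff.mpr (neg_nonpos.mpr (by positivity))
        have e2 : Real.exp (2*r*b)/r^2 * ((r^2*s^2)^1 * Real.exp (-(r^2*s^2)))
            = Real.exp (2*r*b) * (s^2 * Real.exp (-(r^2*s^2))) := by field_simp
        rw [e2]
        have e3 : s ≤ s^2 := by nlinarith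
        calc s * (Real.exp (2*r*b) * (Real.exp (-(r^2*s^2)) * Real.exp (-(b^2/s^2))))
            ≤ s^2 * (Real.exp (2*r*b) * (Real.exp (-(r^2*s^2)) * 1)) := by gcongr
          _ = Real.exp (2*r*b) * (s^2 * Real.exp (-(r^2*s^2))) := by ring
      · exact h2
  simpa using key

lemma K2_val (hr : 0 < r) (hb : 0 < b) :
    ∫ s in Ioi (0:ℝ), s^2 * Real.exp (-(r*s - b/s)^2)
      = Real.sqrt π * (1 + 2*r*b) / (4*r^3) := by
  have hsplit : ∫ s in Ioi (0:ℝ), (1 - 2*(r^2*s^2 - b^2*s⁻¹^2)) * Real.exp (-(r*s - b/s)^2)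
      = (∫ s in Ioi (0:ℝ), Real.exp (-(r*s - b/s)^2))
        - (2*r^2) * (∫ s in Ioi (0:ℝ), s^2 * Real.exp (-(r*s - b/s)^2))
        + (2*b^2) * (∫ s in Ioi (0:ℝ), s⁻¹^2 * Real.exp (-(r*s - b/s)^2)) := by
    have isub : IntegrableOn (fun s => Real.exp (-(r*s - b/s)^2)
        - (2*r^2) * (s^2 * Real.exp (-(r*s - b/s)^2))) (Ioi (0:ℝ)) :=
      (int_K0 hr hb.le).sub ((int_K2 hr hb.le).const_mul (2*r^2))
    have hcongr : ∫ s in Ioi (0:ℝ), (1 - 2*(r^2*s^2 - b^2*s⁻¹^2)) * Real.exp (-(r*s - b/s)^2)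
        = ∫ s in Ioi (0:ℝ), ((Real.exp (-(r*s - b/s)^2)
            - (2*r^2) * (s^2 * Real.exp (-(r*s - b/s)^2)))
            + (2*b^2) * (s⁻¹^2 * Real.exp (-(r*s - b/s)^2))) := by
      apply setIntegral_congr_fun measurableSet_Ioi
      intro s hs
      ring
    rw [hcongr, integral_add isub ((int_Km2 hr hb).const_mul (2*b^2)),
      integral_sub (int_K0 hr hb.le) ((int_K2 hr hb.le).const_mul (2*r^2)),
      integral_const_mul, integral_const_mul]
  rw [FTC_zero hr hb, K0_val hr hb, Km2_val hr hb] at hsplit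
  have hr3 : r^3 > 0 := by positivity
  field_simp at hsplit ⊢
  nlinarith [hsplit]
end

section
lemma subst_sq (F : ℝ → ℝ) :
    ∫ t in Ioi (0:ℝ), F t = ∫ s in Ioi (0:ℝ), (2*s) * F (s^2) := by
  have him : (fun s : ℝ => s^2) '' Ioi 0 = Ioi 0 := by
    apply Subset.antisymm
    · rintro _ ⟨s, hs, rfl⟩
      have hs' : (0:ℝ) < s := hs
      exact mem_Ioi.mpr (by positivity)
    · intro y hy
      have hy' : (0:ℝ) < y := hy
      exact ⟨Real.sqrt y, Real.sqrt_pos.mpr hy', Real.sq_sqrt hy'.le⟩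
  have hder : ∀ s ∈ Ioi (0:ℝ), HasDerivWithinAt (fun s : ℝ => s^2) (2*s) (Ioi 0) s := by
    intro s hs
    simpa [mul_comm] using (hasDerivAt_pow 2 s).hasDerivWithinAt
  have hinj : InjOn (fun s : ℝ => s^2) (Ioi (0:ℝ)) := by
    intro s hs t ht h
    have hs' : (0:ℝ) < s := hs
    have ht' : (0:ℝ) < t := ht
    simp only at h
    have h2 : (s - t) * (s + t) = 0 := by linear_combination h
    rcases mul_eq_zero.mp h2 with h3 | h3
    · linarith
    · linarith
  calc ∫ t in Ioi (0:ℝ), F t = ∫ t in (fun s : ℝ => s^2) '' Ioi 0, F t := by rw [him]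
    _ = ∫ s in Ioi (0:ℝ), |2*s| • F (s^2) :=
        integral_image_eq_integral_abs_deriv_smul measurableSet_Ioi hder hinj F
    _ = ∫ s in Ioi (0:ℝ), (2*s) * F (s^2) := by
        apply setIntegral_congr_fun measurableSet_Ioi
        intro s hs
        have hs' : (0:ℝ) < s := hs
        simp only [smul_eq_mul]
        rw [abs_of_pos (by positivity)]
end

/-- For α > 0 and a ≥ 0,
∫₀^∞ t e^{-αt} e^{-a²/(2t)} / √(2πt) dt = e^{-√(2α) a}(1/(2α√(2α)) + a/(2α)). -/
theorem stmt2 (α a : ℝ) (hα : 0 < α) (ha : 0 ≤ a) :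
    ∫ t in Ioi (0:ℝ),
        t * Real.exp (-α * t) * Real.exp (-a ^ 2 / (2 * t)) / Real.sqrt (2 * π * t)
      = Real.exp (-Real.sqrt (2 * α) * a)
          * (1 / (2 * α * Real.sqrt (2 * α)) + a / (2 * α)) := by
  have hπ : (0:ℝ) < π := Real.pi_pos
  have hsπ : (0:ℝ) < Real.sqrt π := Real.sqrt_pos.mpr hπ
  have hsα : (0:ℝ) < Real.sqrt α := Real.sqrt_pos.mpr hα
  have hs2 : (0:ℝ) < Real.sqrt 2 := Real.sqrt_pos.mpr (by norm_num)
  have h2α : Real.sqrt (2*α) = Real.sqrt 2 * Real.sqrt α := Real.sqrt_mul (by norm_num) α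
  have h2π : Real.sqrt (2*π) = Real.sqrt 2 * Real.sqrt π := Real.sqrt_mul (by norm_num) π
  have hα2 : Real.sqrt α ^ 2 = α := Real.sq_sqrt hα.le
  have hπ2 : Real.sqrt π ^ 2 = π := Real.sq_sqrt hπ.le
  have h22 : Real.sqrt 2 ^ 2 = 2 := Real.sq_sqrt (by norm_num)
  rcases eq_or_lt_of_le ha with rfl | ha'
  · -- a = 0
    have hcongr : ∫ t in Ioi (0:ℝ),
          t * Real.exp (-α * t) * Real.exp (-(0:ℝ) ^ 2 / (2 * t)) / Real.sqrt (2 * π * t)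
        = ∫ t in Ioi (0:ℝ), (1 / Real.sqrt (2*π)) * (t ^ ((3:ℝ)/2 - 1) * Real.exp (-(α * t))) := by
      apply setIntegral_congr_fun measurableSet_Ioi
      intro t ht
      have ht' : (0:ℝ) < t := ht
      have h1 : Real.sqrt (2*π*t) = Real.sqrt (2*π) * Real.sqrt t := Real.sqrt_mul (by positivity) t
      have h2 : t ^ ((3:ℝ)/2 - 1) = Real.sqrt t := by
        rw [show (3:ℝ)/2 - 1 = 1/2 by norm_num, ← Real.sqrt_eq_rpow]
      have h3 : Real.sqrt t > 0 := Real.sqrt_pos.mpr ht'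
      have h4 : Real.sqrt t ^ 2 = t := Real.sq_sqrt ht'.le
      beta_reduce
      rw [h1, h2]
      rw [show -(0:ℝ)^2 / (2*t) = 0 by norm_num, Real.exp_zero, show -α * t = -(α * t) by ring]
      rw [h2π]
      field_simp
      linear_combination -h4
    rw [hcongr, integral_const_mul, integral_rpow_mul_exp_neg_mul_Ioi (by norm_num : (0:ℝ) < 3/2) hα]
    have hg : Real.Gamma ((3:ℝ)/2) = Real.sqrt π / 2 := by
      rw [show (3:ℝ)/2 = 1/2 + 1 by norm_num, Real.Gamma_add_one (by norm_num),
        Real.Gamma_one_half_eq]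
      ring
    rw [hg]
    have h5 : (1/α) ^ ((3:ℝ)/2) = 1/(α * Real.sqrt α) := by
      rw [one_div, Real.inv_rpow hα.le, show (3:ℝ)/2 = 1 + 1/2 by norm_num,
        Real.rpow_add hα, Real.rpow_one, ← Real.sqrt_eq_rpow, one_div]
    rw [h5]
    rw [h2π, h2α, mul_zero, Real.exp_zero]
    field_simp
    ring
  · -- a > 0
    set r := Real.sqrt α with hrdef
    set b := a / Real.sqrt 2 with hbdef
    have hb : 0 < b := by positivity
    have hcongr : ∫ t in Ioi (0:ℝ),
          t * Real.exp (-α * t) * Real.exp (-a ^ 2 / (2 * t)) / Real.sqrt (2 * π * t)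
        = ∫ s in Ioi (0:ℝ), (2*s) * (fun t => t * Real.exp (-α * t) * Real.exp (-a ^ 2 / (2 * t))
            / Real.sqrt (2 * π * t)) (s^2) :=
      subst_sq _
    have hcongr2 : ∫ s in Ioi (0:ℝ), (2*s) * (fun t => t * Real.exp (-α * t)
            * Real.exp (-a ^ 2 / (2 * t)) / Real.sqrt (2 * π * t)) (s^2)
        = ∫ s in Ioi (0:ℝ), ((2 / Real.sqrt (2*π)) * Real.exp (-(2*r*b)))
            * (s^2 * Real.exp (-(r*s - b/s)^2)) := by
      apply setIntegral_congr_fun measurableSet_Ioi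
      intro s hs
      have hs' : (0:ℝ) < s := hs
      beta_reduce
      have h1 : Real.sqrt (2*π*s^2) = Real.sqrt (2*π) * s := by
        rw [Real.sqrt_mul (by positivity), Real.sqrt_sq hs'.le]
      rw [h1]
      have hb2 : b^2 = a^2/2 := by
        rw [hbdef, div_pow, h22]
      have h2 : -α * s^2 + -a^2/(2*s^2) = -(r*s - b/s)^2 + -(2*r*b) := by
        have e : (r*s - b/s)^2 = r^2*s^2 - 2*(r*b) + b^2/s^2 := by
          field_simp; ring
        rw [e, hα2, hb2]
        field_simp; ring
      have h3 : Real.exp (-α * s^2) * Real.exp (-a^2/(2*s^2))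
          = Real.exp (-(r*s - b/s)^2) * Real.exp (-(2*r*b)) := by
        rw [← Real.exp_add, ← Real.exp_add, h2]
      have hsp : (0:ℝ) < Real.sqrt (2*π) := by rw [h2π]; positivity
      set E1 := Real.exp (-α * s^2) with hE1
      set E2 := Real.exp (-a^2/(2*s^2)) with hE2
      set EA := Real.exp (-(r*s - b/s)^2) with hEA
      set EB := Real.exp (-(2*r*b)) with hEB
      calc 2*s * (s^2 * E1 * E2 / (Real.sqrt (2*π) * s))
          = (2*s^2/Real.sqrt (2*π)) * (E1 * E2) := by
            field_simp
        _ = (2*s^2/Real.sqrt (2*π)) * (EA * EB) := by rw [h3]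
        _ = 2 / Real.sqrt (2*π) * EB * (s^2 * EA) := by ring
    rw [hcongr, hcongr2, integral_const_mul, K2_val hsα hb]
    have hexp : -Real.sqrt (2*α) * a = -(2*r*b) := by
      rw [h2α, hrdef, hbdef]
      field_simp
      linear_combination (-1:ℝ) * h22
    rw [hexp]
    have key : 2 / Real.sqrt (2*π) * (Real.sqrt π * (1 + 2*r*b) / (4 * r^3))
        = 1 / (2 * α * Real.sqrt (2*α)) + a / (2*α) := by
      rw [h2π, h2α, hbdef]
      field_simp
      linear_combination (-4*Real.sqrt 2 - 8*r*a) * hα2 + (-4*r^3*a) * h22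
    linear_combination (Real.exp (-(2*r*b))) * key
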